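/- Let Q and M be n×n real symmetric positive semidefinite matrices, let N and Ñ be n×n real symmetric positive definite matrices, and let S be an n×n real symmetric matrix. Suppose (Q+Ñ)⁻¹ = (Q+N)⁻¹ + M and (S − Q)·M = 0 (the zero matrix). Then det(S + Ñ)·det(Q + N) = det(S + N)·det(Q + Ñ). -/

import Mathlib

open Matrix

/-- Let `Q, M` be real symmetric PSD, `N, Ñ` real symmetric positive
definite, and `S` real symmetric. If `(Q+Ñ)⁻¹ = (Q+N)⁻¹ + M` and `(S − Q)·M = 0`,
then `det(S+Ñ)·det(Q+N) = det(S+N)·det(Q+Ñ)`. -/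
theorem stmt_5 {n : ℕ} (Q M N Ntil S : Matrix (Fin n) (Fin n) ℝ)
    (hQ : Q.PosSemidef) (hM : M.PosSemidef)
    (hN : N.PosDef) (hNtil : Ntil.PosDef) (hS : S.IsHermitian)
    (hrel : (Q + Ntil)⁻¹ = (Q + N)⁻¹ + M)
    (hSM : (S - Q) * M = 0) :
    (S + Ntil).det * (Q + N).det = (S + N).det * (Q + Ntil).det := by
  have hQN : (Q + N).PosDef := Matrix.PosDef.posSemidef_add hQ hN
  have hQNtil : (Q + Ntil).PosDef := Matrix.PosDef.posSemidef_add hQ hNtil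
  have hdN : (Q + N).det ≠ 0 := hQN.det_pos.ne'
  have hdNtil : (Q + Ntil).det ≠ 0 := hQNtil.det_pos.ne'
  have key : (S + Ntil) * (Q + Ntil)⁻¹ = (S + N) * (Q + N)⁻¹ := by
    have h1 : S + Ntil = (S - Q) + (Q + Ntil) := by abel
    have h2 : S + N = (S - Q) + (Q + N) := by abel
    have e1 : (S - Q + (Q + Ntil)) * (Q + Ntil)⁻¹ = (S - Q) * (Q + Ntil)⁻¹ + 1 := by
      rw [add_mul, mul_nonsing_inv _ (isUnit_iff_ne_zero.mpr hdNtil)]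
    have e2 : (S - Q + (Q + N)) * (Q + N)⁻¹ = (S - Q) * (Q + N)⁻¹ + 1 := by
      rw [add_mul, mul_nonsing_inv _ (isUnit_iff_ne_zero.mpr hdN)]
    rw [h1, h2, e1, e2, hrel, mul_add, hSM, add_zero]
  have := congrArg Matrix.det key
  rw [det_mul, det_mul, det_nonsing_inv, det_nonsing_inv, Ring.inverse_eq_inv'] at this
  field_simp at this
  linarith [this]
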